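/- Let ∅ ≠ I ⊆ {1,…,d} and let S_I := {X ∈ S_d : I(X) = I}. Then: (i) for X, Y ∈ S_d, δ(X,Y) < +∞ if and only if Δ(X) = Δ(Y); (ii) the restriction of δ to S_I × S_I is a metric on S_I (finite, symmetric, satisfying the triangle inequality, and vanishing exactly on the diagonal); (iii) for all X, Y ∈ S_I, (1/d)·‖X − Y‖ ≤ δ(X,Y) ≤ ‖X − Y‖ / min_{i ∈ I} min(X(i), Y(i)). -/

import Mathlib

open Matrix Filter Finset Topology
open scoped ENNReal Classical

/-- Hypothesis (H): the nonzero entries of `A` form a nonempty rectangular block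
`I_A × J_A`. -/
def satH {d1 d2 : ℕ} (A : Matrix (Fin d1) (Fin d2) ℝ) : Prop :=
  ∃ (I : Set (Fin d1)) (J : Set (Fin d2)), I.Nonempty ∧ J.Nonempty ∧
    ∀ i j, A i j ≠ 0 ↔ i ∈ I ∧ j ∈ J

/-- The δ-coefficient of a matrix: `sup` of `log((A i j · A k l)/(A k j · A i l))` over
indices in the nonzero block if (H) holds, `+∞` otherwise. -/
noncomputable def deltaC {d1 d2 : ℕ} (A : Matrix (Fin d1) (Fin d2) ℝ) : ℝ≥0∞ :=
  if satH A then
    ENNReal.ofReal (sSup {x | ∃ i k j l, A i j ≠ 0 ∧ A k j ≠ 0 ∧ A i l ≠ 0 ∧ A k l ≠ 0 ∧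
      x = Real.log (A i j * A k l / (A k j * A i l))})
  else ⊤

/-- The generalized contraction coefficient `τ(A) = tanh(δ(A)/4)`, equal to `1`
when `δ(A) = +∞`. -/
noncomputable def tauC {d1 d2 : ℕ} (A : Matrix (Fin d1) (Fin d2) ℝ) : ℝ :=
  if deltaC A = ⊤ then 1 else Real.tanh ((deltaC A).toReal / 4)

/-- ℓ¹-norm (sum of absolute values of the entries) of a vector. -/
noncomputable def l1 {d : ℕ} (v : Fin d → ℝ) : ℝ := ∑ i, |v i|

/-- Probability vector: nonnegative entries summing to `1`. -/
def probVec {d : ℕ} (X : Fin d → ℝ) : Prop := (∀ i, 0 ≤ X i) ∧ ∑ i, X i = 1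

/-- Projective distance between two column vectors, i.e. `δ` of the `d×2` matrix whose
columns are `X` and `Y`. -/
noncomputable def deltaV {d : ℕ} (X Y : Fin d → ℝ) : ℝ≥0∞ :=
  deltaC (Matrix.of fun i (j : Fin 2) => if j = 0 then X i else Y i)

namespace PA

variable {d : ℕ}

lemma exists_ne_zero {X : Fin d → ℝ} (hX : probVec X) : ∃ i, X i ≠ 0 := by
  by_contra h
  push_neg at h
  have h0 : ∑ i, X i = 0 := Finset.sum_eq_zero (fun i _ => h i)
  rw [hX.2] at h0; norm_num at h0

lemma pos_of_mem {I : Finset (Fin d)} {X : Fin d → ℝ} (hX : probVec X)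
    (hXI : ∀ i, X i ≠ 0 ↔ i ∈ I) {i : Fin d} (hi : i ∈ I) : 0 < X i :=
  lt_of_le_of_ne (hX.1 i) (Ne.symm ((hXI i).mpr hi))

lemma sum_support {I : Finset (Fin d)} {X : Fin d → ℝ} (hX : probVec X)
    (hXI : ∀ i, X i ≠ 0 ↔ i ∈ I) : ∑ i ∈ I, X i = 1 := by
  rw [← hX.2]
  exact Finset.sum_subset (Finset.subset_univ I)
    (fun x _ hx => by by_contra h; exact hx ((hXI x).mp h))

lemma exists_le {I : Finset (Fin d)} (hI : I.Nonempty) {X Y : Fin d → ℝ}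
    (hX : probVec X) (hY : probVec Y)
    (hXI : ∀ i, X i ≠ 0 ↔ i ∈ I) (hYI : ∀ i, Y i ≠ 0 ↔ i ∈ I) :
    ∃ i ∈ I, X i ≤ Y i := by
  by_contra h
  push_neg at h
  have := Finset.sum_lt_sum_of_nonempty hI h
  rw [sum_support hX hXI, sum_support hY hYI] at this
  exact lt_irrefl _ this

lemma one_le_sup' {I : Finset (Fin d)} (hI : I.Nonempty) {X Y : Fin d → ℝ}
    (hX : probVec X) (hY : probVec Y)
    (hXI : ∀ i, X i ≠ 0 ↔ i ∈ I) (hYI : ∀ i, Y i ≠ 0 ↔ i ∈ I) :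
    1 ≤ I.sup' hI fun i => X i / Y i := by
  obtain ⟨i, hi, hle⟩ := exists_le hI hY hX hYI hXI
  have hY' : 0 < Y i := pos_of_mem hY hYI hi
  calc (1:ℝ) ≤ X i / Y i := (one_le_div hY').mpr hle
    _ ≤ _ := Finset.le_sup' (fun i => X i / Y i) hi

lemma inf'_le_one {I : Finset (Fin d)} (hI : I.Nonempty) {X Y : Fin d → ℝ}
    (hX : probVec X) (hY : probVec Y)
    (hXI : ∀ i, X i ≠ 0 ↔ i ∈ I) (hYI : ∀ i, Y i ≠ 0 ↔ i ∈ I) :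
    (I.inf' hI fun i => X i / Y i) ≤ 1 := by
  obtain ⟨i, hi, hle⟩ := exists_le hI hX hY hXI hYI
  have hY' : 0 < Y i := pos_of_mem hY hYI hi
  calc (I.inf' hI fun i => X i / Y i) ≤ X i / Y i := Finset.inf'_le _ hi
    _ ≤ 1 := (div_le_one hY').mpr hle

lemma deltaV_eq {I : Finset (Fin d)} (hI : I.Nonempty) {X Y : Fin d → ℝ}
    (hX : probVec X) (hY : probVec Y)
    (hXI : ∀ i, X i ≠ 0 ↔ i ∈ I) (hYI : ∀ i, Y i ≠ 0 ↔ i ∈ I) :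
    deltaV X Y = ENNReal.ofReal
      (Real.log (I.sup' hI fun i => X i / Y i) - Real.log (I.inf' hI fun i => X i / Y i)) := by
  classical
  set A : Matrix (Fin d) (Fin 2) ℝ :=
    Matrix.of (fun i (j : Fin 2) => if j = 0 then X i else Y i) with hAdef
  have hA0 : ∀ i, A i 0 = X i := fun i => rfl
  have hA1 : ∀ i, A i 1 = Y i := fun i => rfl
  have hj2 : ∀ j : Fin 2, j = 0 ∨ j = 1 := by decide
  have hAne : ∀ i j, A i j ≠ 0 ↔ i ∈ I := by
    intro i j
    rcases hj2 j with rfl | rfl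
    · rw [hA0]; exact hXI i
    · rw [hA1]; exact hYI i
  have hXpos : ∀ i ∈ I, 0 < X i := fun i hi => pos_of_mem hX hXI hi
  have hYpos : ∀ i ∈ I, 0 < Y i := fun i hi => pos_of_mem hY hYI hi
  have hrpos : ∀ i ∈ I, 0 < X i / Y i := fun i hi => div_pos (hXpos i hi) (hYpos i hi)
  set M := I.sup' hI fun i => X i / Y i with hMdef
  set m := I.inf' hI fun i => X i / Y i with hmdef
  have hm : 0 < m := (Finset.lt_inf'_iff hI).mpr hrpos
  obtain ⟨i0, hi0, hMi0⟩ := Finset.exists_mem_eq_sup' hI fun i => X i / Y i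
  obtain ⟨k0, hk0, hmk0⟩ := Finset.exists_mem_eq_inf' hI fun i => X i / Y i
  rw [← hMdef] at hMi0
  rw [← hmdef] at hmk0
  have hM : 0 < M := by rw [hMi0]; exact hrpos i0 hi0
  have hmM : m ≤ M := by
    rw [hMi0]; exact Finset.inf'_le _ hi0
  have hD0 : (0:ℝ) ≤ Real.log M - Real.log m :=
    sub_nonneg.mpr (Real.log_le_log hm hmM)
  have hsat : satH A :=
    ⟨↑I, Set.univ, Finset.coe_nonempty.mpr hI, Set.univ_nonempty,
      fun i j => by simp [hAne i j]⟩
  have hub : ∀ x ∈ {x | ∃ i k j l, A i j ≠ 0 ∧ A k j ≠ 0 ∧ A i l ≠ 0 ∧ A k l ≠ 0 ∧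
      x = Real.log (A i j * A k l / (A k j * A i l))}, x ≤ Real.log M - Real.log m := by
    rintro x ⟨i, k, j, l, h1, h2, h3, h4, rfl⟩
    have hiI : i ∈ I := (hAne i j).mp h1
    have hkI : k ∈ I := (hAne k j).mp h2
    have hri : 0 < X i / Y i := hrpos i hiI
    have hrk : 0 < X k / Y k := hrpos k hkI
    have hXi := hXpos i hiI; have hXk := hXpos k hkI
    have hYi := hYpos i hiI; have hYk := hYpos k hkI
    have hle1 : Real.log (X i / Y i) ≤ Real.log M :=
      Real.log_le_log hri (Finset.le_sup' (fun i => X i / Y i) hiI)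
    have hle2 : Real.log m ≤ Real.log (X k / Y k) :=
      Real.log_le_log hm (Finset.inf'_le _ hkI)
    have hle3 : Real.log (X k / Y k) ≤ Real.log M :=
      Real.log_le_log hrk (Finset.le_sup' (fun i => X i / Y i) hkI)
    have hle4 : Real.log m ≤ Real.log (X i / Y i) :=
      Real.log_le_log hm (Finset.inf'_le _ hiI)
    rcases hj2 j with rfl | rfl <;> rcases hj2 l with rfl | rfl <;>
      simp only [hA0, hA1]
    · rw [show X i * X k / (X k * X i) = 1 by field_simp, Real.log_one]; exact hD0
    · rw [show X i * Y k / (X k * Y i) = (X i / Y i) / (X k / Y k) by field_simp,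
        Real.log_div (ne_of_gt hri) (ne_of_gt hrk)]
      exact sub_le_sub hle1 hle2
    · rw [show Y i * X k / (Y k * X i) = (X k / Y k) / (X i / Y i) by field_simp,
        Real.log_div (ne_of_gt hrk) (ne_of_gt hri)]
      exact sub_le_sub hle3 hle4
    · rw [show Y i * Y k / (Y k * Y i) = 1 by field_simp, Real.log_one]; exact hD0
  have hmem : Real.log M - Real.log m ∈ {x | ∃ i k j l, A i j ≠ 0 ∧ A k j ≠ 0 ∧ A i l ≠ 0 ∧
      A k l ≠ 0 ∧ x = Real.log (A i j * A k l / (A k j * A i l))} := by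
    refine ⟨i0, k0, 0, 1, ?_, ?_, ?_, ?_, ?_⟩
    · exact (hAne i0 0).mpr hi0
    · exact (hAne k0 0).mpr hk0
    · exact (hAne i0 1).mpr hi0
    · exact (hAne k0 1).mpr hk0
    · rw [hA0, hA0, hA1, hA1, hMi0, hmk0]
      have hXi := hXpos i0 hi0; have hXk := hXpos k0 hk0
      have hYi := hYpos i0 hi0; have hYk := hYpos k0 hk0
      rw [show X i0 * Y k0 / (X k0 * Y i0) = (X i0 / Y i0) / (X k0 / Y k0) by field_simp,
        Real.log_div (ne_of_gt (hrpos i0 hi0)) (ne_of_gt (hrpos k0 hk0))]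
  have hsup : sSup {x | ∃ i k j l, A i j ≠ 0 ∧ A k j ≠ 0 ∧ A i l ≠ 0 ∧ A k l ≠ 0 ∧
      x = Real.log (A i j * A k l / (A k j * A i l))} = Real.log M - Real.log m :=
    le_antisymm (csSup_le ⟨_, hmem⟩ hub) (le_csSup ⟨_, hub⟩ hmem)
  rw [deltaV, ← hAdef, deltaC, if_pos hsat, hsup]

lemma deltaV_ne_top_iff {X Y : Fin d → ℝ} (hX : probVec X) (hY : probVec Y) :
    deltaV X Y ≠ ⊤ ↔ ∀ i, (X i ≠ 0 ↔ Y i ≠ 0) := by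
  classical
  set A : Matrix (Fin d) (Fin 2) ℝ :=
    Matrix.of (fun i (j : Fin 2) => if j = 0 then X i else Y i) with hAdef
  have hA0 : ∀ i, A i 0 = X i := fun i => rfl
  have hA1 : ∀ i, A i 1 = Y i := fun i => rfl
  have hj2 : ∀ j : Fin 2, j = 0 ∨ j = 1 := by decide
  have h1 : deltaV X Y ≠ ⊤ ↔ satH A := by
    rw [deltaV, ← hAdef, deltaC]
    by_cases h : satH A
    · simp [h, ENNReal.ofReal_ne_top]
    · simp [h]
  rw [h1]
  constructor
  · rintro ⟨I', J', hI', hJ', h⟩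
    obtain ⟨iX, hiX⟩ := exists_ne_zero hX
    obtain ⟨iY, hiY⟩ := exists_ne_zero hY
    have h0J : (0 : Fin 2) ∈ J' := ((h iX 0).mp (by rw [hA0]; exact hiX)).2
    have h1J : (1 : Fin 2) ∈ J' := ((h iY 1).mp (by rw [hA1]; exact hiY)).2
    intro i
    constructor
    · intro hXi
      have := (h i 0).mp (by rw [hA0]; exact hXi)
      rw [← hA1 i]; exact (h i 1).mpr ⟨this.1, h1J⟩
    · intro hYi
      have := (h i 1).mp (by rw [hA1]; exact hYi)
      rw [← hA0 i]; exact (h i 0).mpr ⟨this.1, h0J⟩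
  · intro hsame
    obtain ⟨iX, hiX⟩ := exists_ne_zero hX
    refine ⟨{i | X i ≠ 0}, Set.univ, ⟨iX, hiX⟩, Set.univ_nonempty, fun i j => ?_⟩
    rcases hj2 j with rfl | rfl
    · rw [hA0]; simp [Set.mem_setOf_eq]
    · rw [hA1]; simp [Set.mem_setOf_eq, (hsame i).symm]

lemma sup'_div_symm {I : Finset (Fin d)} (hI : I.Nonempty) {X Y : Fin d → ℝ}
    (hXpos : ∀ i ∈ I, 0 < X i) (hYpos : ∀ i ∈ I, 0 < Y i) :
    (I.sup' hI fun i => Y i / X i) = (I.inf' hI fun i => X i / Y i)⁻¹ := by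
  have hm : 0 < I.inf' hI fun i => X i / Y i :=
    (Finset.lt_inf'_iff hI).mpr fun i hi => div_pos (hXpos i hi) (hYpos i hi)
  apply le_antisymm
  · rw [Finset.sup'_le_iff]
    intro i hi
    rw [show Y i / X i = (X i / Y i)⁻¹ by rw [inv_div]]
    exact inv_anti₀ hm (Finset.inf'_le _ hi)
  · obtain ⟨k0, hk0, hk⟩ := Finset.exists_mem_eq_inf' hI fun i => X i / Y i
    rw [hk, inv_div]
    exact Finset.le_sup' (fun i => Y i / X i) hk0

lemma inf'_div_symm {I : Finset (Fin d)} (hI : I.Nonempty) {X Y : Fin d → ℝ}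
    (hXpos : ∀ i ∈ I, 0 < X i) (hYpos : ∀ i ∈ I, 0 < Y i) :
    (I.inf' hI fun i => Y i / X i) = (I.sup' hI fun i => X i / Y i)⁻¹ := by
  apply le_antisymm
  · obtain ⟨i0, hi0, hs⟩ := Finset.exists_mem_eq_sup' hI fun i => X i / Y i
    rw [hs, inv_div]
    exact Finset.inf'_le _ hi0
  · rw [Finset.le_inf'_iff]
    intro i hi
    rw [show Y i / X i = (X i / Y i)⁻¹ by rw [inv_div]]
    exact inv_anti₀ (div_pos (hXpos i hi) (hYpos i hi))
      (Finset.le_sup' (fun i => X i / Y i) hi)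

lemma lower_bound {I : Finset (Fin d)} (hI : I.Nonempty) {X Y : Fin d → ℝ}
    (hX : probVec X) (hY : probVec Y)
    (hXI : ∀ i, X i ≠ 0 ↔ i ∈ I) (hYI : ∀ i, Y i ≠ 0 ↔ i ∈ I) :
    l1 (X - Y) ≤ 2 * (Real.log (I.sup' hI fun i => X i / Y i) -
      Real.log (I.inf' hI fun i => X i / Y i)) := by
  have hXpos : ∀ i ∈ I, 0 < X i := fun i hi => pos_of_mem hX hXI hi
  have hYpos : ∀ i ∈ I, 0 < Y i := fun i hi => pos_of_mem hY hYI hi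
  set M := I.sup' hI fun i => X i / Y i with hMdef
  set m := I.inf' hI fun i => X i / Y i with hmdef
  have hm : 0 < m :=
    (Finset.lt_inf'_iff hI).mpr fun i hi => div_pos (hXpos i hi) (hYpos i hi)
  have hM1 : 1 ≤ M := one_le_sup' hI hX hY hXI hYI
  have hm1 : m ≤ 1 := inf'_le_one hI hX hY hXI hYI
  have hMpos : (0:ℝ) < M := lt_of_lt_of_le one_pos hM1
  have hterm : ∀ i, max (X i - Y i) 0 ≤ X i * (1 - 1/M) := by
    intro i
    have hfrac : 1/M ≤ 1 := by rw [div_le_one hMpos]; exact hM1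
    rcases le_or_gt (X i) (Y i) with h | h
    · rw [max_eq_right (by linarith)]
      exact mul_nonneg (hX.1 i) (by linarith)
    · have hXi : 0 < X i := lt_of_le_of_lt (hY.1 i) h
      have hiI : i ∈ I := (hXI i).mp (ne_of_gt hXi)
      have hYi : 0 < Y i := hYpos i hiI
      have hr : X i / Y i ≤ M := Finset.le_sup' (fun i => X i / Y i) hiI
      have hXle : X i ≤ M * Y i := (div_le_iff₀ hYi).mp hr
      rw [max_eq_left (by linarith)]
      have h2 : X i / M ≤ Y i := (div_le_iff₀ hMpos).mpr (by linarith)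
      have h3 : X i * (1 - 1/M) = X i - X i / M := by field_simp
      linarith
  have habs : ∀ i, |X i - Y i| = 2 * max (X i - Y i) 0 - (X i - Y i) := by
    intro i
    rcases le_total (X i) (Y i) with h | h
    · rw [abs_of_nonpos (by linarith), max_eq_right (by linarith)]; ring
    · rw [abs_of_nonneg (by linarith), max_eq_left (by linarith)]; ring
  have hsum0 : ∑ i, (X i - Y i) = 0 := by
    rw [Finset.sum_sub_distrib, hX.2, hY.2]; ring
  have hl1 : l1 (X - Y) = 2 * ∑ i, max (X i - Y i) 0 := by
    rw [l1]
    simp only [Pi.sub_apply]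
    rw [Finset.sum_congr rfl (fun i _ => habs i), Finset.sum_sub_distrib, hsum0,
      ← Finset.mul_sum]
    ring
  have hmaxsum : ∑ i, max (X i - Y i) 0 ≤ 1 - 1/M := by
    calc ∑ i, max (X i - Y i) 0 ≤ ∑ i, X i * (1 - 1/M) :=
          Finset.sum_le_sum (fun i _ => hterm i)
      _ = 1 - 1/M := by rw [← Finset.sum_mul, hX.2, one_mul]
  have hlog : 1 - 1/M ≤ Real.log M := by
    have h := Real.log_le_sub_one_of_pos (inv_pos.mpr hMpos)
    rw [Real.log_inv] at h
    have : 1/M = M⁻¹ := one_div M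
    linarith
  have hlogm : Real.log m ≤ 0 := Real.log_nonpos (le_of_lt hm) hm1
  linarith

lemma upper_bound {I : Finset (Fin d)} (hI : I.Nonempty) {X Y : Fin d → ℝ}
    (hX : probVec X) (hY : probVec Y)
    (hXI : ∀ i, X i ≠ 0 ↔ i ∈ I) (hYI : ∀ i, Y i ≠ 0 ↔ i ∈ I) :
    Real.log (I.sup' hI fun i => X i / Y i) - Real.log (I.inf' hI fun i => X i / Y i) ≤
      l1 (X - Y) / I.inf' hI fun i => min (X i) (Y i) := by
  have hXpos : ∀ i ∈ I, 0 < X i := fun i hi => pos_of_mem hX hXI hi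
  have hYpos : ∀ i ∈ I, 0 < Y i := fun i hi => pos_of_mem hY hYI hi
  have hrpos : ∀ i ∈ I, 0 < X i / Y i := fun i hi => div_pos (hXpos i hi) (hYpos i hi)
  set M := I.sup' hI fun i => X i / Y i with hMdef
  set m := I.inf' hI fun i => X i / Y i with hmdef
  set mm := I.inf' hI fun i => min (X i) (Y i) with hmmdef
  have hmm : 0 < mm :=
    (Finset.lt_inf'_iff hI).mpr fun i hi => lt_min (hXpos i hi) (hYpos i hi)
  have hl1nn : 0 ≤ l1 (X - Y) := Finset.sum_nonneg fun i _ => abs_nonneg _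
  have hm : 0 < m := (Finset.lt_inf'_iff hI).mpr hrpos
  obtain ⟨i0, hi0, hMi0⟩ := Finset.exists_mem_eq_sup' hI fun i => X i / Y i
  obtain ⟨k0, hk0, hmk0⟩ := Finset.exists_mem_eq_inf' hI fun i => X i / Y i
  rw [← hMdef] at hMi0
  rw [← hmdef] at hmk0
  by_cases heq : M = m
  · rw [heq, sub_self]
    exact div_nonneg hl1nn (le_of_lt hmm)
  · have hne : i0 ≠ k0 := by
      rintro rfl
      exact heq (hMi0.trans hmk0.symm)
    have hXi0 := hXpos i0 hi0
    have hYi0 := hYpos i0 hi0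
    have hXk0 := hXpos k0 hk0
    have hYk0 := hYpos k0 hk0
    have hmmYi0 : mm ≤ Y i0 :=
      le_trans (Finset.inf'_le _ hi0) (min_le_right _ _)
    have hmmXk0 : mm ≤ X k0 :=
      le_trans (Finset.inf'_le _ hk0) (min_le_left _ _)
    have e1 : Real.log M ≤ |X i0 - Y i0| / mm := by
      rw [hMi0]
      have h1 : Real.log (X i0 / Y i0) ≤ X i0 / Y i0 - 1 :=
        Real.log_le_sub_one_of_pos (hrpos i0 hi0)
      have h2 : X i0 / Y i0 - 1 = (X i0 - Y i0) / Y i0 := by field_simp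
      have h3 : (X i0 - Y i0) / Y i0 ≤ |X i0 - Y i0| / Y i0 :=
        (div_le_div_iff_of_pos_right hYi0).mpr (le_abs_self _)
      have h4 : |X i0 - Y i0| / Y i0 ≤ |X i0 - Y i0| / mm :=
        div_le_div_of_nonneg_left (abs_nonneg _) hmm hmmYi0
      linarith
    have e2 : -Real.log m ≤ |X k0 - Y k0| / mm := by
      rw [hmk0, ← Real.log_inv, inv_div]
      have h1 : Real.log (Y k0 / X k0) ≤ Y k0 / X k0 - 1 :=
        Real.log_le_sub_one_of_pos (div_pos hYk0 hXk0)
      have h2 : Y k0 / X k0 - 1 = (Y k0 - X k0) / X k0 := by field_simp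
      have h3 : (Y k0 - X k0) / X k0 ≤ |X k0 - Y k0| / X k0 := by
        rw [abs_sub_comm]
        exact (div_le_div_iff_of_pos_right hXk0).mpr (le_abs_self _)
      have h4 : |X k0 - Y k0| / X k0 ≤ |X k0 - Y k0| / mm :=
        div_le_div_of_nonneg_left (abs_nonneg _) hmm hmmXk0
      linarith
    have hsum2 : |X i0 - Y i0| + |X k0 - Y k0| ≤ l1 (X - Y) := by
      have hsub : ({i0, k0} : Finset (Fin d)) ⊆ Finset.univ := Finset.subset_univ _
      have h := Finset.sum_le_sum_of_subset_of_nonneg hsub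
        (fun i _ _ => abs_nonneg ((X - Y) i))
      rw [Finset.sum_pair hne] at h
      simpa [l1, Pi.sub_apply] using h
    calc Real.log M - Real.log m ≤ |X i0 - Y i0| / mm + |X k0 - Y k0| / mm := by linarith
      _ = (|X i0 - Y i0| + |X k0 - Y k0|) / mm := (add_div _ _ _).symm
      _ ≤ l1 (X - Y) / mm := (div_le_div_iff_of_pos_right hmm).mpr hsum2

end PA

/-- **Proposition 2.4.** For `∅ ≠ I ⊆ {1,…,d}` and `S_I = {X ∈ S_d : I(X) = I}`:
(i) for probability vectors, `δ(X,Y) < ∞` iff `Δ(X) = Δ(Y)`;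
(ii) `δ` restricted to `S_I` is a metric;
(iii) `(1/d)·‖X−Y‖ ≤ δ(X,Y) ≤ ‖X−Y‖ / min_{i∈I} min(X i, Y i)`. -/
theorem projectiveDistance_props {d : ℕ} (I : Finset (Fin d)) (hI : I.Nonempty) :
    -- (i)
    (∀ X Y : Fin d → ℝ, probVec X → probVec Y →
      (deltaV X Y ≠ ⊤ ↔ ∀ i, (X i ≠ 0 ↔ Y i ≠ 0))) ∧
    -- (ii) : δ is a finite metric on S_I
    (∀ X Y Z : Fin d → ℝ,
      probVec X → probVec Y → probVec Z →
      (∀ i, X i ≠ 0 ↔ i ∈ I) → (∀ i, Y i ≠ 0 ↔ i ∈ I) → (∀ i, Z i ≠ 0 ↔ i ∈ I) →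
      deltaV X Y ≠ ⊤ ∧ (deltaV X Y = 0 ↔ X = Y) ∧ deltaV X Y = deltaV Y X ∧
        deltaV X Z ≤ deltaV X Y + deltaV Y Z) ∧
    -- (iii)
    (∀ X Y : Fin d → ℝ,
      probVec X → probVec Y →
      (∀ i, X i ≠ 0 ↔ i ∈ I) → (∀ i, Y i ≠ 0 ↔ i ∈ I) →
      ENNReal.ofReal ((1 / (d : ℝ)) * l1 (X - Y)) ≤ deltaV X Y ∧
        deltaV X Y ≤
          ENNReal.ofReal (l1 (X - Y) / I.inf' hI fun i => min (X i) (Y i))) := by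
  classical
  refine ⟨fun X Y hX hY => PA.deltaV_ne_top_iff hX hY, ?_, ?_⟩
  · -- part (ii)
    intro X Y Z hX hY hZ hXI hYI hZI
    have hXpos : ∀ i ∈ I, 0 < X i := fun i hi => PA.pos_of_mem hX hXI hi
    have hYpos : ∀ i ∈ I, 0 < Y i := fun i hi => PA.pos_of_mem hY hYI hi
    have hZpos : ∀ i ∈ I, 0 < Z i := fun i hi => PA.pos_of_mem hZ hZI hi
    refine ⟨?_, ?_, ?_, ?_⟩
    · rw [PA.deltaV_eq hI hX hY hXI hYI]
      exact ENNReal.ofReal_ne_top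
    · -- zero iff eq
      rw [PA.deltaV_eq hI hX hY hXI hYI, ENNReal.ofReal_eq_zero]
      set M := I.sup' hI fun i => X i / Y i with hMdef
      set m := I.inf' hI fun i => X i / Y i with hmdef
      have hrpos : ∀ i ∈ I, 0 < X i / Y i :=
        fun i hi => div_pos (hXpos i hi) (hYpos i hi)
      have hm : 0 < m := (Finset.lt_inf'_iff hI).mpr hrpos
      obtain ⟨i0, hi0, hMi0⟩ := Finset.exists_mem_eq_sup' hI fun i => X i / Y i
      rw [← hMdef] at hMi0
      have hM : 0 < M := by rw [hMi0]; exact hrpos i0 hi0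
      have hmM : m ≤ M := by rw [hMi0]; exact Finset.inf'_le _ hi0
      constructor
      · intro h
        have hlogeq : Real.log M = Real.log m :=
          le_antisymm (by linarith) (Real.log_le_log hm hmM)
        have hMeqm : M = m :=
          Real.log_injOn_pos (Set.mem_Ioi.mpr hM) (Set.mem_Ioi.mpr hm) hlogeq
        have hr : ∀ i ∈ I, X i / Y i = m := by
          intro i hi
          refine le_antisymm ?_ ?_
          · rw [← hMeqm]
            have := Finset.le_sup' (fun i => X i / Y i) hi
            rwa [← hMdef] at this
          · have := Finset.inf'_le (fun i => X i / Y i) hi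
            rwa [← hmdef] at this
        have hXY : ∀ i ∈ I, X i = m * Y i := by
          intro i hi
          have := hr i hi
          rw [div_eq_iff (ne_of_gt (hYpos i hi))] at this
          linarith
        have hm1 : m = 1 := by
          have h1 : ∑ i ∈ I, X i = m * ∑ i ∈ I, Y i := by
            rw [Finset.mul_sum]
            exact Finset.sum_congr rfl (fun i hi => hXY i hi)
          rw [PA.sum_support hX hXI, PA.sum_support hY hYI, mul_one] at h1
          linarith
        funext i
        by_cases hi : i ∈ I
        · rw [hXY i hi, hm1, one_mul]
        · have hx0 : X i = 0 := by by_contra h'; exact hi ((hXI i).mp h')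
          have hy0 : Y i = 0 := by by_contra h'; exact hi ((hYI i).mp h')
          rw [hx0, hy0]
      · rintro rfl
        have h1 : M = 1 := by
          rw [hMdef]
          apply le_antisymm
          · rw [Finset.sup'_le_iff]
            intro i hi
            rw [div_self (ne_of_gt (hXpos i hi))]
          · obtain ⟨i, hi⟩ := id hI
            calc (1:ℝ) = X i / X i := (div_self (ne_of_gt (hXpos i hi))).symm
              _ ≤ _ := Finset.le_sup' (fun i => X i / X i) hi
        have h2 : m = 1 := by
          rw [hmdef]
          apply le_antisymm
          · obtain ⟨i, hi⟩ := id hI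
            calc (I.inf' hI fun i => X i / X i) ≤ X i / X i := Finset.inf'_le _ hi
              _ = 1 := div_self (ne_of_gt (hXpos i hi))
          · rw [Finset.le_inf'_iff]
            intro i hi
            rw [div_self (ne_of_gt (hXpos i hi))]
        rw [h1, h2, sub_self]
    · -- symmetry
      rw [PA.deltaV_eq hI hX hY hXI hYI, PA.deltaV_eq hI hY hX hYI hXI,
        PA.sup'_div_symm hI hXpos hYpos, PA.inf'_div_symm hI hXpos hYpos,
        Real.log_inv, Real.log_inv]
      congr 1
      ring
    · -- triangle inequality
      have hrXY : ∀ i ∈ I, 0 < X i / Y i :=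
        fun i hi => div_pos (hXpos i hi) (hYpos i hi)
      have hrYZ : ∀ i ∈ I, 0 < Y i / Z i :=
        fun i hi => div_pos (hYpos i hi) (hZpos i hi)
      have hrXZ : ∀ i ∈ I, 0 < X i / Z i :=
        fun i hi => div_pos (hXpos i hi) (hZpos i hi)
      have hmXY : 0 < I.inf' hI fun i => X i / Y i := (Finset.lt_inf'_iff hI).mpr hrXY
      have hmYZ : 0 < I.inf' hI fun i => Y i / Z i := (Finset.lt_inf'_iff hI).mpr hrYZ
      have hmXZ : 0 < I.inf' hI fun i => X i / Z i := (Finset.lt_inf'_iff hI).mpr hrXZ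
      obtain ⟨a0, ha0, hA⟩ := Finset.exists_mem_eq_sup' hI fun i => X i / Y i
      obtain ⟨b0, hb0, hB⟩ := Finset.exists_mem_eq_sup' hI fun i => Y i / Z i
      obtain ⟨c0, hc0, hC⟩ := Finset.exists_mem_eq_sup' hI fun i => X i / Z i
      have hMXY : 0 < I.sup' hI fun i => X i / Y i := by rw [hA]; exact hrXY a0 ha0
      have hMYZ : 0 < I.sup' hI fun i => Y i / Z i := by rw [hB]; exact hrYZ b0 hb0
      have hMXZ : 0 < I.sup' hI fun i => X i / Z i := by rw [hC]; exact hrXZ c0 hc0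
      have hD1 : 0 ≤ Real.log (I.sup' hI fun i => X i / Y i) -
          Real.log (I.inf' hI fun i => X i / Y i) := by
        apply sub_nonneg.mpr
        apply Real.log_le_log hmXY
        rw [hA]; exact Finset.inf'_le _ ha0
      have hD2 : 0 ≤ Real.log (I.sup' hI fun i => Y i / Z i) -
          Real.log (I.inf' hI fun i => Y i / Z i) := by
        apply sub_nonneg.mpr
        apply Real.log_le_log hmYZ
        rw [hB]; exact Finset.inf'_le _ hb0
      rw [PA.deltaV_eq hI hX hZ hXI hZI, PA.deltaV_eq hI hX hY hXI hYI,
        PA.deltaV_eq hI hY hZ hYI hZI, ← ENNReal.ofReal_add hD1 hD2]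
      apply ENNReal.ofReal_le_ofReal
      have hs : (I.sup' hI fun i => X i / Z i) ≤
          (I.sup' hI fun i => X i / Y i) * (I.sup' hI fun i => Y i / Z i) := by
        rw [Finset.sup'_le_iff]
        intro i hi
        have hYne : Y i ≠ 0 := ne_of_gt (hYpos i hi)
        have hZne : Z i ≠ 0 := ne_of_gt (hZpos i hi)
        have heq : X i / Z i = (X i / Y i) * (Y i / Z i) := by
          field_simp
        rw [heq]
        exact mul_le_mul (Finset.le_sup' (fun i => X i / Y i) hi)
          (Finset.le_sup' (fun i => Y i / Z i) hi)
          (le_of_lt (hrYZ i hi)) (le_of_lt hMXY)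
      have hinf : (I.inf' hI fun i => X i / Y i) * (I.inf' hI fun i => Y i / Z i) ≤
          I.inf' hI fun i => X i / Z i := by
        rw [Finset.le_inf'_iff]
        intro i hi
        have hYne : Y i ≠ 0 := ne_of_gt (hYpos i hi)
        have hZne : Z i ≠ 0 := ne_of_gt (hZpos i hi)
        have heq : X i / Z i = (X i / Y i) * (Y i / Z i) := by
          field_simp
        rw [heq]
        exact mul_le_mul (Finset.inf'_le (fun i => X i / Y i) hi)
          (Finset.inf'_le (fun i => Y i / Z i) hi)
          (le_of_lt hmYZ) (le_of_lt (hrXY i hi))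
      have l1' : Real.log (I.sup' hI fun i => X i / Z i) ≤
          Real.log (I.sup' hI fun i => X i / Y i) +
          Real.log (I.sup' hI fun i => Y i / Z i) := by
        rw [← Real.log_mul (ne_of_gt hMXY) (ne_of_gt hMYZ)]
        exact Real.log_le_log hMXZ hs
      have l2' : Real.log (I.inf' hI fun i => X i / Y i) +
          Real.log (I.inf' hI fun i => Y i / Z i) ≤
          Real.log (I.inf' hI fun i => X i / Z i) := by
        rw [← Real.log_mul (ne_of_gt hmXY) (ne_of_gt hmYZ)]
        exact Real.log_le_log (mul_pos hmXY hmYZ) hinf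
      linarith
  · -- part (iii)
    intro X Y hX hY hXI hYI
    have hXpos : ∀ i ∈ I, 0 < X i := fun i hi => PA.pos_of_mem hX hXI hi
    have hYpos : ∀ i ∈ I, 0 < Y i := fun i hi => PA.pos_of_mem hY hYI hi
    have hrpos : ∀ i ∈ I, 0 < X i / Y i :=
      fun i hi => div_pos (hXpos i hi) (hYpos i hi)
    have hm : 0 < I.inf' hI fun i => X i / Y i := (Finset.lt_inf'_iff hI).mpr hrpos
    have hl1nn : 0 ≤ l1 (X - Y) := Finset.sum_nonneg fun i _ => abs_nonneg _
    obtain ⟨i0, hi0, hMi0⟩ := Finset.exists_mem_eq_sup' hI fun i => X i / Y i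
    have hD0 : 0 ≤ Real.log (I.sup' hI fun i => X i / Y i) -
        Real.log (I.inf' hI fun i => X i / Y i) := by
      apply sub_nonneg.mpr
      apply Real.log_le_log hm
      rw [hMi0]; exact Finset.inf'_le _ hi0
    constructor
    · -- lower bound
      rcases Nat.lt_or_ge d 2 with hd | hd
      · -- d = 1 : X = Y
        have hd1 : d = 1 := by
          obtain ⟨i, _⟩ := hI
          have := i.pos
          omega
        subst hd1
        have hXY : X = Y := by
          funext i
          have hi0' : i = 0 := Subsingleton.elim i 0
          have hx : X 0 = 1 := by rw [← hX.2, Fin.sum_univ_one]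
          have hy : Y 0 = 1 := by rw [← hY.2, Fin.sum_univ_one]
          rw [hi0', hx, hy]
        have : l1 (X - Y) = 0 := by
          simp [l1, hXY, sub_self]
        rw [this, mul_zero, ENNReal.ofReal_zero]
        exact zero_le
      · rw [PA.deltaV_eq hI hX hY hXI hYI]
        apply ENNReal.ofReal_le_ofReal
        have hlb := PA.lower_bound hI hX hY hXI hYI
        have hd' : (2:ℝ) ≤ d := by exact_mod_cast hd
        have hdpos : (0:ℝ) < d := by linarith
        have h1 : (1:ℝ)/d ≤ 1/2 := by
          apply div_le_div_of_nonneg_left one_pos.le (by norm_num) hd'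
        have h2 : (1/(d:ℝ)) * l1 (X - Y) ≤ (1/2) * l1 (X - Y) :=
          mul_le_mul_of_nonneg_right h1 hl1nn
        linarith
    · rw [PA.deltaV_eq hI hX hY hXI hYI]
      exact ENNReal.ofReal_le_ofReal (PA.upper_bound hI hX hY hXI hYI)
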